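/- arXiv:1601.01563 — 2 statements merged into one kernel-verified Lean document; each statement's English description precedes it below -/
import Mathlib

section
/- Let p ≥ 2 and let a, b be vectors in a real inner product space (in particular ℝⁿ). Then (4/p²) · ‖ |b|^{(p−2)/2} b − |a|^{(p−2)/2} a ‖² ≤ ⟨ |b|^{p−2} b − |a|^{p−2} a , b − a ⟩, where |·| = ‖·‖ denotes the norm and ⟨·,·⟩ the inner product. -/
open RealInnerProductSpace

set_option maxHeartbeats 1000000

private lemma bi_step1 (q : ℝ) (hq : 1 ≤ q) {A B : ℝ} (hA : 0 ≤ A) (hAB : A ≤ B) :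
    B ^ q - A ^ q ≤ q * B ^ (q - 1) * (B - A) := by
  rcases eq_or_lt_of_le (hA.trans hAB) with hB | hB
  · have hA0 : A = 0 := le_antisymm (hAB.trans hB.symm.le) hA
    have hB0 : B = 0 := hB.symm
    subst hA0; subst hB0
    simp
  · have hBne : B ≠ 0 := ne_of_gt hB
    have hx : (-1 : ℝ) ≤ A / B - 1 := by
      have : 0 ≤ A / B := div_nonneg hA hB.le
      linarith
    have bern := one_add_mul_self_le_rpow_one_add hx hq
    have h1x : 1 + (A / B - 1) = A / B := by ring
    rw [h1x] at bern
    have hdiv : (A / B) ^ q = A ^ q / B ^ q := Real.div_rpow hA hB.le q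
    rw [hdiv] at bern
    have hBq : (0 : ℝ) < B ^ q := Real.rpow_pos_of_pos hB q
    have bern' : (1 + q * (A / B - 1)) * B ^ q ≤ A ^ q := by
      calc (1 + q * (A / B - 1)) * B ^ q ≤ (A ^ q / B ^ q) * B ^ q :=
            mul_le_mul_of_nonneg_right bern hBq.le
        _ = A ^ q := div_mul_cancel₀ _ (ne_of_gt hBq)
    rw [Real.rpow_sub hB, Real.rpow_one]
    have expand : q * (B ^ q / B) * (B - A) = -(q * (A / B - 1) * B ^ q) := by
      field_simp
      ring
    rw [expand]
    nlinarith [bern']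

private lemma bi_scalar_aux (p : ℝ) (hp : 2 ≤ p) {A B : ℝ} (hA : 0 ≤ A) (hAB : A ≤ B) :
    (4 / p ^ 2) * (B ^ (p / 2) - A ^ (p / 2)) ^ 2 ≤ (B - A) * (B ^ (p - 1) - A ^ (p - 1)) := by
  have hB : 0 ≤ B := hA.trans hAB
  set q := p / 2 with hqdef
  have hq : 1 ≤ q := by rw [hqdef]; linarith
  have h1 : B ^ q - A ^ q ≤ q * B ^ (q - 1) * (B - A) := bi_step1 q hq hA hAB
  have h0 : 0 ≤ B ^ q - A ^ q :=
    sub_nonneg.2 (Real.rpow_le_rpow hA hAB (by linarith))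
  have e1 : B ^ (p - 1) = B ^ (q - 1) * B ^ q := by
    rw [← Real.rpow_add' hB (by rw [hqdef]; intro h; nlinarith)]
    congr 1
    rw [hqdef]; ring
  have e2 : A ^ (p - 1) = A ^ (q - 1) * A ^ q := by
    rw [← Real.rpow_add' hA (by rw [hqdef]; intro h; nlinarith)]
    congr 1
    rw [hqdef]; ring
  have hmono : A ^ (q - 1) ≤ B ^ (q - 1) := Real.rpow_le_rpow hA hAB (by linarith)
  have hAq : 0 ≤ A ^ q := Real.rpow_nonneg hA q
  have h2 : B ^ (q - 1) * (B ^ q - A ^ q) ≤ B ^ (p - 1) - A ^ (p - 1) := by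
    rw [e1, e2]
    nlinarith [mul_le_mul_of_nonneg_right hmono hAq]
  have hqBA : 0 ≤ q * (B - A) := mul_nonneg (by linarith) (by linarith)
  have key : (B ^ q - A ^ q) ^ 2 ≤ q * (B - A) * (B ^ (p - 1) - A ^ (p - 1)) := by
    calc (B ^ q - A ^ q) ^ 2 = (B ^ q - A ^ q) * (B ^ q - A ^ q) := sq (B ^ q - A ^ q)
      _ ≤ (q * B ^ (q - 1) * (B - A)) * (B ^ q - A ^ q) :=
          mul_le_mul_of_nonneg_right h1 h0
      _ = q * (B - A) * (B ^ (q - 1) * (B ^ q - A ^ q)) := by ring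
      _ ≤ q * (B - A) * (B ^ (p - 1) - A ^ (p - 1)) :=
          mul_le_mul_of_nonneg_left h2 hqBA
  have hprod : 0 ≤ (B - A) * (B ^ (p - 1) - A ^ (p - 1)) := by
    have := Real.rpow_le_rpow hA hAB (by linarith : (0:ℝ) ≤ p - 1)
    have hba : 0 ≤ B - A := by linarith
    exact mul_nonneg hba (by linarith)
  have hq2 : q ≤ q ^ 2 := by nlinarith
  have key2 : (B ^ q - A ^ q) ^ 2 ≤ q ^ 2 * ((B - A) * (B ^ (p - 1) - A ^ (p - 1))) := by
    calc (B ^ q - A ^ q) ^ 2 ≤ q * (B - A) * (B ^ (p - 1) - A ^ (p - 1)) := key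
      _ = q * ((B - A) * (B ^ (p - 1) - A ^ (p - 1))) := by ring
      _ ≤ q ^ 2 * ((B - A) * (B ^ (p - 1) - A ^ (p - 1))) :=
          mul_le_mul_of_nonneg_right hq2 hprod
  have hp2 : (0:ℝ) < p ^ 2 := by positivity
  have h4q : 4 * q ^ 2 = p ^ 2 := by rw [hqdef]; ring
  rw [div_mul_eq_mul_div, div_le_iff₀ hp2]
  nlinarith [key2]

private lemma bi_scalar (p : ℝ) (hp : 2 ≤ p) {A B : ℝ} (hA : 0 ≤ A) (hB : 0 ≤ B) :
    (4 / p ^ 2) * (B ^ (p / 2) - A ^ (p / 2)) ^ 2 ≤ (B - A) * (B ^ (p - 1) - A ^ (p - 1)) := by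
  rcases le_total A B with h | h
  · exact bi_scalar_aux p hp hA h
  · have := bi_scalar_aux p hp hB h
    have e1 : (A ^ (p / 2) - B ^ (p / 2)) ^ 2 = (B ^ (p / 2) - A ^ (p / 2)) ^ 2 := by ring
    have e2 : (A - B) * (A ^ (p - 1) - B ^ (p - 1))
        = (B - A) * (B ^ (p - 1) - A ^ (p - 1)) := by ring
    rw [e1, e2] at this
    exact this

/-- The Bojarski–Iwaniec vector inequality (7): for `p ≥ 2`
and vectors `a, b` in a real inner product space,
`(4/p²)·‖|b|^{(p-2)/2}b − |a|^{(p-2)/2}a‖² ≤ ⟨|b|^{p-2}b − |a|^{p-2}a, b − a⟩`. -/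
theorem bojarski_iwaniec_ineq_one {V : Type*} [NormedAddCommGroup V]
    [InnerProductSpace ℝ V] (p : ℝ) (hp : 2 ≤ p) (a b : V) :
    (4 / p ^ 2) * ‖(‖b‖ ^ ((p - 2) / 2)) • b - (‖a‖ ^ ((p - 2) / 2)) • a‖ ^ 2 ≤
      ⟪(‖b‖ ^ (p - 2)) • b - (‖a‖ ^ (p - 2)) • a, b - a⟫ := by
  have hA : (0:ℝ) ≤ ‖a‖ := norm_nonneg a
  have hB : (0:ℝ) ≤ ‖b‖ := norm_nonneg b
  set A := ‖a‖ with hAdef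
  set B := ‖b‖ with hBdef
  set s := (p - 2) / 2 with hs
  set u := A ^ s with hu
  set v := B ^ s with hv
  have hu0 : 0 ≤ u := Real.rpow_nonneg hA s
  have hv0 : 0 ≤ v := Real.rpow_nonneg hB s
  have hA2 : A ^ (p - 2) = u ^ 2 := by
    rw [hu, ← Real.rpow_natCast (A ^ s) 2, ← Real.rpow_mul hA]
    congr 1
    rw [hs]; push_cast; ring
  have hB2 : B ^ (p - 2) = v ^ 2 := by
    rw [hv, ← Real.rpow_natCast (B ^ s) 2, ← Real.rpow_mul hB]
    congr 1
    rw [hs]; push_cast; ring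
  have huA : u * A = A ^ (p / 2) := by
    rw [hu]
    rw [show p / 2 = s + 1 by rw [hs]; ring]
    rw [Real.rpow_add' hA (by rw [hs]; intro h; nlinarith), Real.rpow_one]
  have hvB : v * B = B ^ (p / 2) := by
    rw [hv]
    rw [show p / 2 = s + 1 by rw [hs]; ring]
    rw [Real.rpow_add' hB (by rw [hs]; intro h; nlinarith), Real.rpow_one]
  have hu2A : u ^ 2 * A = A ^ (p - 1) := by
    rw [← hA2]
    rw [show p - 1 = (p - 2) + 1 by ring]
    rw [Real.rpow_add' hA (by intro h; nlinarith), Real.rpow_one]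
  have hv2B : v ^ 2 * B = B ^ (p - 1) := by
    rw [← hB2]
    rw [show p - 1 = (p - 2) + 1 by ring]
    rw [Real.rpow_add' hB (by intro h; nlinarith), Real.rpow_one]
  have ht : ⟪a, b⟫ ≤ A * B := real_inner_le_norm a b
  have hnorm : ‖v • b - u • a‖ ^ 2
      = v ^ 2 * B ^ 2 - 2 * (u * v) * ⟪a, b⟫ + u ^ 2 * A ^ 2 := by
    rw [norm_sub_sq_real, norm_smul, norm_smul, real_inner_smul_left,
      real_inner_smul_right, real_inner_comm b a]
    simp [Real.norm_eq_abs, abs_of_nonneg hu0, abs_of_nonneg hv0, mul_pow]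
    ring
  have hinner : ⟪(B ^ (p - 2)) • b - (A ^ (p - 2)) • a, b - a⟫
      = v ^ 2 * B ^ 2 - (u ^ 2 + v ^ 2) * ⟪a, b⟫ + u ^ 2 * A ^ 2 := by
    rw [hA2, hB2]
    simp [inner_sub_left, inner_sub_right, real_inner_smul_left,
      real_inner_self_eq_norm_sq, real_inner_comm b a]
    ring
  rw [hinner, hnorm]
  have key := bi_scalar p hp hA hB
  rw [← huA, ← hvB, ← hu2A, ← hv2B] at key
  have hk1 : 4 / p ^ 2 ≤ 1 := by
    rw [div_le_one (by positivity)]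
    nlinarith
  have hk0 : 0 < 4 / p ^ 2 := by positivity
  have hcoef : 0 ≤ u ^ 2 + v ^ 2 - 2 * (4 / p ^ 2) * (u * v) := by
    nlinarith [sq_nonneg (u - v), mul_nonneg hu0 hv0]
  have hmul : 0 ≤ (u ^ 2 + v ^ 2 - 2 * (4 / p ^ 2) * (u * v)) * (A * B - ⟪a, b⟫) :=
    mul_nonneg hcoef (by linarith)
  nlinarith [key, hmul]
end

section
/- Let p ≥ 2 and let a, b be vectors in a real inner product space (in particular ℝⁿ). Then ‖ |b|^{p−2} b − |a|^{p−2} a ‖ ≤ (p−1) · ( |b|^{(p−2)/2} + |a|^{(p−2)/2} ) · ‖ |b|^{(p−2)/2} b − |a|^{(p−2)/2} a ‖, where |·| = ‖·‖ denotes the norm. -/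
private lemma bi_aux {V : Type*} [NormedAddCommGroup V]
    [InnerProductSpace ℝ V] (s : ℝ) (hs : 0 ≤ s) (a b : V) (hab : ‖a‖ ≤ ‖b‖) :
    ‖(‖b‖ ^ s * ‖b‖ ^ s) • b - (‖a‖ ^ s * ‖a‖ ^ s) • a‖ ≤
      (‖b‖ ^ s + ‖a‖ ^ s) * ‖(‖b‖ ^ s) • b - (‖a‖ ^ s) • a‖ := by
  set α := ‖a‖ ^ s with hα
  set β := ‖b‖ ^ s with hβ
  have hα0 : 0 ≤ α := Real.rpow_nonneg (norm_nonneg a) s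
  have hβ0 : 0 ≤ β := Real.rpow_nonneg (norm_nonneg b) s
  have hαβ : α ≤ β := Real.rpow_le_rpow (norm_nonneg a) hab hs
  have hid : (β * β) • b - (α * α) • a =
      (2:ℝ)⁻¹ • ((β + α) • (β • b - α • a) + (β - α) • (β • b + α • a)) := by
    module
  rw [hid, norm_smul]
  have h1 : ‖(β + α) • (β • b - α • a) + (β - α) • (β • b + α • a)‖ ≤
      (β + α) * ‖β • b - α • a‖ + (β - α) * ‖β • b + α • a‖ := by
    calc _ ≤ ‖(β + α) • (β • b - α • a)‖ + ‖(β - α) • (β • b + α • a)‖ :=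
          norm_add_le _ _
      _ = (β + α) * ‖β • b - α • a‖ + (β - α) * ‖β • b + α • a‖ := by
          rw [norm_smul, norm_smul, Real.norm_of_nonneg (by linarith),
            Real.norm_of_nonneg (by linarith)]
  have h2 : (β - α) * ‖β • b + α • a‖ ≤ (β + α) * ‖β • b - α • a‖ := by
    have hn1 : ‖β • b + α • a‖ ≤ β * ‖b‖ + α * ‖a‖ := by
      calc ‖β • b + α • a‖ ≤ ‖β • b‖ + ‖α • a‖ := norm_add_le _ _
        _ = β * ‖b‖ + α * ‖a‖ := by
            rw [norm_smul, norm_smul, Real.norm_of_nonneg hα0,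
              Real.norm_of_nonneg hβ0]
    have hn2 : β * ‖b‖ - α * ‖a‖ ≤ ‖β • b - α • a‖ := by
      calc β * ‖b‖ - α * ‖a‖ = ‖β • b‖ - ‖α • a‖ := by
            rw [norm_smul, norm_smul, Real.norm_of_nonneg hα0,
              Real.norm_of_nonneg hβ0]
        _ ≤ ‖β • b - α • a‖ := norm_sub_norm_le _ _
    have key : (β - α) * (β * ‖b‖ + α * ‖a‖) ≤ (β + α) * (β * ‖b‖ - α * ‖a‖) := by
      nlinarith [mul_nonneg hα0 hβ0, norm_nonneg a, norm_nonneg b]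
    calc (β - α) * ‖β • b + α • a‖ ≤ (β - α) * (β * ‖b‖ + α * ‖a‖) :=
          mul_le_mul_of_nonneg_left hn1 (by linarith)
      _ ≤ (β + α) * (β * ‖b‖ - α * ‖a‖) := key
      _ ≤ (β + α) * ‖β • b - α • a‖ :=
          mul_le_mul_of_nonneg_left hn2 (by linarith)
  have : ‖(2:ℝ)⁻¹‖ = (2:ℝ)⁻¹ := by norm_num
  rw [this]
  nlinarith [norm_nonneg (β • b - α • a), h1, h2]

/-- The Bojarski–Iwaniec vector inequality (8): for `p ≥ 2`
and vectors `a, b` in a real inner product space,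
`‖|b|^{p-2}b − |a|^{p-2}a‖ ≤ (p−1)(|b|^{(p-2)/2} + |a|^{(p-2)/2})·‖|b|^{(p-2)/2}b − |a|^{(p-2)/2}a‖`. -/
theorem bojarski_iwaniec_ineq_two {V : Type*} [NormedAddCommGroup V]
    [InnerProductSpace ℝ V] (p : ℝ) (hp : 2 ≤ p) (a b : V) :
    ‖(‖b‖ ^ (p - 2)) • b - (‖a‖ ^ (p - 2)) • a‖ ≤
      (p - 1) * (‖b‖ ^ ((p - 2) / 2) + ‖a‖ ^ ((p - 2) / 2)) *
        ‖(‖b‖ ^ ((p - 2) / 2)) • b - (‖a‖ ^ ((p - 2) / 2)) • a‖ := by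
  set s : ℝ := (p - 2) / 2 with hsdef
  have hs : 0 ≤ s := by simp only [hsdef]; linarith
  have hsplit : ∀ x : ℝ, 0 ≤ x → x ^ (p - 2) = x ^ s * x ^ s := by
    intro x hx
    rw [show p - 2 = s * 2 by simp only [hsdef]; ring, Real.rpow_mul hx,
      show (2:ℝ) = ((2:ℕ):ℝ) by norm_num, Real.rpow_natCast]
    ring
  rw [hsplit _ (norm_nonneg a), hsplit _ (norm_nonneg b)]
  have hbase : ‖(‖b‖ ^ s * ‖b‖ ^ s) • b - (‖a‖ ^ s * ‖a‖ ^ s) • a‖ ≤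
      (‖b‖ ^ s + ‖a‖ ^ s) * ‖(‖b‖ ^ s) • b - (‖a‖ ^ s) • a‖ := by
    rcases le_total ‖a‖ ‖b‖ with h | h
    · exact bi_aux s hs a b h
    · have := bi_aux s hs b a h
      rw [norm_sub_rev ((‖a‖ ^ s * ‖a‖ ^ s) • a), norm_sub_rev ((‖a‖ ^ s) • a)] at this
      linarith
  have hnn : 0 ≤ (‖b‖ ^ s + ‖a‖ ^ s) * ‖(‖b‖ ^ s) • b - (‖a‖ ^ s) • a‖ :=
    mul_nonneg (by positivity) (norm_nonneg _)
  calc _ ≤ (‖b‖ ^ s + ‖a‖ ^ s) * ‖(‖b‖ ^ s) • b - (‖a‖ ^ s) • a‖ := hbase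
    _ ≤ (p - 1) * ((‖b‖ ^ s + ‖a‖ ^ s) * ‖(‖b‖ ^ s) • b - (‖a‖ ^ s) • a‖) := by
        nlinarith
    _ = (p - 1) * (‖b‖ ^ s + ‖a‖ ^ s) * ‖(‖b‖ ^ s) • b - (‖a‖ ^ s) • a‖ := by ring
end
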